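/- (Cauchy–Schwarz kinetic energy lower bound) Let $\varrho \in \mathcal E^+$ with spectral elements $(\rho_p, \phi_p)$, local density $n[\varrho] = \sum_p \rho_p |\phi_p|^2$, and kinetic energy $E(\varrho) = \frac{1}{2}\sum_p \rho_p \|\nabla\phi_p\|_{L^2}^2$. Then $\frac{1}{2}\|\nabla\sqrt{n[\varrho]}\|_{L^2}^2 \le E(\varrho)$. -/

import Mathlib

open MeasureTheory

open MeasureTheory Metric Set Filter Topology

lemma aux_expand {f : ℝ → ℝ} {s : Set ℝ} (c : ℝ) (hμ : volume s ≠ ⊤)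
    (hf : IntegrableOn f s) (hf2 : IntegrableOn (fun x => f x ^ 2) s) :
    ∫ x in s, (f x - c) ^ 2
      = (∫ x in s, f x ^ 2) - 2 * c * (∫ x in s, f x) + c ^ 2 * (volume s).toReal := by
  have hconst : IntegrableOn (fun _ : ℝ => c ^ 2) s :=
    (integrableOn_const_iff (C := c ^ 2)).mpr (Or.inr hμ.lt_top)
  have hfc : IntegrableOn (fun x => 2 * c * f x) s := hf.const_mul _
  have e1 : ∀ x : ℝ, (f x - c) ^ 2 = (f x ^ 2 - 2 * c * f x) + c ^ 2 := fun x => by ring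
  have hsub : IntegrableOn (fun x => f x ^ 2 - 2 * c * f x) s := hf2.sub hfc
  rw [integral_congr_ae (ae_of_all _ e1),
    integral_add hsub hconst, integral_sub hf2 hfc,
    integral_const_mul, setIntegral_const, smul_eq_mul, measureReal_def]
  ring

/-- Cauchy–Schwarz for set integrals of nonnegative functions. -/
lemma aux_sq_setIntegral_le {s : Set ℝ} (hμ : volume s ≠ ⊤) {f : ℝ → ℝ}
    (hf : IntegrableOn f s) (hf2 : IntegrableOn (fun x => f x ^ 2) s) :
    (∫ x in s, f x) ^ 2 ≤ (volume s).toReal * ∫ x in s, f x ^ 2 := by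
  have hm : 0 ≤ (volume s).toReal := ENNReal.toReal_nonneg
  rcases eq_or_lt_of_le hm with h0 | h0
  · have hs0 : volume s = 0 := by
      rcases (ENNReal.toReal_eq_zero_iff _).mp h0.symm with h | h
      · exact h
      · exact absurd h hμ
    rw [Measure.restrict_eq_zero.mpr hs0]
    simp
  · have key : 0 ≤ ∫ x in s, (f x - (∫ y in s, f y) / (volume s).toReal) ^ 2 :=
      integral_nonneg (fun x => sq_nonneg _)
    rw [aux_expand _ hμ hf hf2] at key
    set m := (volume s).toReal
    set t := ∫ x in s, f x
    have e3 : (t / m) ^ 2 * m = t ^ 2 / m := by field_simp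
    have e4 : 2 * (t / m) * t = 2 * (t ^ 2 / m) := by ring
    rw [e3, e4] at key
    have h5 : t ^ 2 / m ≤ ∫ x in s, f x ^ 2 := by linarith
    calc t ^ 2 = (t ^ 2 / m) * m := by field_simp
    _ ≤ (∫ x in s, f x ^ 2) * m := mul_le_mul_of_nonneg_right h5 hm
    _ = m * ∫ x in s, f x ^ 2 := mul_comm _ _

lemma aux_rpow_two (x : ℝ) : x ^ ((2:ENNReal)).toReal = x ^ 2 := by
  rw [show ((2:ENNReal)).toReal = ((2:ℕ):ℝ) by norm_num, Real.rpow_natCast]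

/-- Reverse triangle inequality in ℓ². -/
lemma aux_l2 {u v : ℕ → ℂ} (hu : Summable (fun p => ‖u p‖ ^ 2))
    (hv : Summable fun p => ‖v p‖ ^ 2) (hd : Summable fun p => ‖u p - v p‖ ^ 2) :
    |Real.sqrt (∑' p, ‖u p‖ ^ 2) - Real.sqrt (∑' p, ‖v p‖ ^ 2)|
      ≤ Real.sqrt (∑' p, ‖u p - v p‖ ^ 2) := by
  have hp : (0:ℝ) < ((2:ENNReal)).toReal := by norm_num
  set U : lp (fun _ : ℕ => ℂ) 2 := ⟨u, memℓp_gen (by simpa [aux_rpow_two] using hu)⟩ with hU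
  set V : lp (fun _ : ℕ => ℂ) 2 := ⟨v, memℓp_gen (by simpa [aux_rpow_two] using hv)⟩ with hV
  have nU : ‖U‖ ^ 2 = ∑' p, ‖u p‖ ^ 2 := by
    have := lp.norm_rpow_eq_tsum hp U
    simpa [aux_rpow_two] using this
  have nV : ‖V‖ ^ 2 = ∑' p, ‖v p‖ ^ 2 := by
    have := lp.norm_rpow_eq_tsum hp V
    simpa [aux_rpow_two] using this
  have nUV : ‖U - V‖ ^ 2 = ∑' p, ‖u p - v p‖ ^ 2 := by
    have := lp.norm_rpow_eq_tsum hp (U - V)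
    simp only [aux_rpow_two] at this
    rw [this]
    apply tsum_congr
    intro p
    rw [lp.coeFn_sub]
    rfl
  rw [← nU, ← nV, ← nUV, Real.sqrt_sq (norm_nonneg U), Real.sqrt_sq (norm_nonneg V),
    Real.sqrt_sq (norm_nonneg (U - V))]
  exact abs_norm_sub_norm_le U V

/-- FTC plus Cauchy–Schwarz: `‖F b - F a‖² ≤ (b-a) ∫ ‖F'‖²`. -/
lemma aux_ftc_cs {F g : ℝ → ℂ} {a b : ℝ} (hab : a ≤ b)
    (hd : ∀ x, HasDerivAt F (g x) x)
    (hg : IntegrableOn g (Ioc a b))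
    (hg2 : IntegrableOn (fun x => ‖g x‖ ^ 2) (Ioc a b)) :
    ‖F b - F a‖ ^ 2 ≤ (b - a) * ∫ x in Ioc a b, ‖g x‖ ^ 2 := by
  have hInt : IntervalIntegrable g volume a b :=
    (intervalIntegrable_iff_integrableOn_Ioc_of_le hab).mpr hg
  have hftc : ∫ x in a..b, g x = F b - F a :=
    intervalIntegral.integral_eq_sub_of_hasDerivAt (fun x _ => hd x) hInt
  have h1 : ‖F b - F a‖ ≤ ∫ x in Ioc a b, ‖g x‖ := by
    rw [← hftc, ← intervalIntegral.integral_of_le hab]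
    exact intervalIntegral.norm_integral_le_integral_norm hab
  have h2 : ‖F b - F a‖ ^ 2 ≤ (∫ x in Ioc a b, ‖g x‖) ^ 2 :=
    pow_le_pow_left₀ (norm_nonneg _) h1 2
  refine h2.trans ?_
  have hvol : volume (Ioc a b) = ENNReal.ofReal (b - a) := Real.volume_Ioc
  have := aux_sq_setIntegral_le (s := Ioc a b) (by simp [hvol]) hg.norm hg2
  rwa [hvol, ENNReal.toReal_ofReal (by linarith)] at this

/-- Symmetric difference quotient converges to the derivative. -/
lemma aux_symm_quot {f : ℝ → ℝ} {x c : ℝ} (hf : HasDerivAt f c x) :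
    Tendsto (fun r => (f (x + r) - f (x - r)) / (2 * r)) (𝓝[>] (0:ℝ)) (𝓝 c) := by
  have hs := hasDerivAt_iff_tendsto_slope.mp hf
  have hplus : Tendsto (fun r : ℝ => x + r) (𝓝[>] (0:ℝ)) (𝓝[≠] x) := by
    rw [tendsto_nhdsWithin_iff]
    constructor
    · have : Tendsto (fun r : ℝ => x + r) (𝓝 (0:ℝ)) (𝓝 (x + 0)) :=
        (continuous_const.add continuous_id).tendsto 0
      simpa using this.mono_left nhdsWithin_le_nhds
    · filter_upwards [self_mem_nhdsWithin] with r (hr : (0:ℝ) < r)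
      simp only [Set.mem_compl_iff, Set.mem_singleton_iff]
      intro h
      nlinarith [hr, congrArg (· - x) h]
  have hminus : Tendsto (fun r : ℝ => x - r) (𝓝[>] (0:ℝ)) (𝓝[≠] x) := by
    rw [tendsto_nhdsWithin_iff]
    constructor
    · have : Tendsto (fun r : ℝ => x - r) (𝓝 (0:ℝ)) (𝓝 (x - 0)) :=
        (continuous_const.sub continuous_id).tendsto 0
      simpa using this.mono_left nhdsWithin_le_nhds
    · filter_upwards [self_mem_nhdsWithin] with r (hr : (0:ℝ) < r)
      simp only [Set.mem_compl_iff, Set.mem_singleton_iff]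
      intro h
      nlinarith [hr, congrArg (· - x) h]
  have T1 := hs.comp hplus
  have T2 := hs.comp hminus
  have T : Tendsto (fun r => (slope f x (x + r) + slope f x (x - r)) / 2)
      (𝓝[>] (0:ℝ)) (𝓝 ((c + c) / 2)) := (T1.add T2).div_const 2
  have heq : ∀ᶠ r in 𝓝[>] (0:ℝ),
      (slope f x (x + r) + slope f x (x - r)) / 2
        = (f (x + r) - f (x - r)) / (2 * r) := by
    filter_upwards [self_mem_nhdsWithin] with r (hr : (0:ℝ) < r)
    have hr' : r ≠ 0 := ne_of_gt hr
    rw [slope_def_field, slope_def_field, show x + r - x = r by ring,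
      show x - r - x = -r by ring, div_neg]
    field_simp
    ring
  have := T.congr' heq
  simpa using this
open MeasureTheory Metric Set Filter Topology


set_option maxHeartbeats 1000000 in
/-- Cauchy–Schwarz kinetic energy lower bound: for a density operator with spectral
elements `(ρ_p, φ_p)`, local density `n = ∑ ρ_p |φ_p|²` and kinetic energy
`E = (1/2) ∑ ρ_p ‖φ_p'‖²`, one has `(1/2)‖(√n)'‖_{L²}² ≤ E`. -/
theorem stmt8 (ρ : ℕ → ℝ) (φ dφ : ℕ → ℝ → ℂ) (n ds : ℝ → ℝ)
    (hρ : ∀ p, 0 ≤ ρ p)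
    (hφ : ∀ p x, HasDerivAt (φ p) (dφ p x) x)
    (hn : ∀ x, n x = ∑' p, ρ p * ‖φ p x‖ ^ 2)
    (hs : ∀ x, HasDerivAt (fun y => Real.sqrt (n y)) (ds x) x)
    (hI : ∀ p, IntervalIntegrable (fun x => ‖dφ p x‖ ^ 2) volume 0 1)
    (hIs : IntervalIntegrable (fun x => (ds x) ^ 2) volume 0 1)
    (hE : Summable (fun p => ρ p * ∫ x in (0:ℝ)..1, ‖dφ p x‖ ^ 2)) :
    (1 / 2) * ∫ x in (0:ℝ)..1, (ds x) ^ 2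
      ≤ (1 / 2) * ∑' p, ρ p * ∫ x in (0:ℝ)..1, ‖dφ p x‖ ^ 2 := by
  classical
  -- measurability
  have hdφ_eq : ∀ p, dφ p = deriv (φ p) := fun p => funext fun x => ((hφ p x).deriv).symm
  have meas_dφ : ∀ p, Measurable (dφ p) := fun p => (hdφ_eq p) ▸ measurable_deriv (φ p)
  have meas_D : ∀ p, Measurable (fun x => ρ p * ‖dφ p x‖ ^ 2) := fun p =>
    (((meas_dφ p).norm).pow_const 2).const_mul (ρ p)
  have Dnn : ∀ p (x : ℝ), 0 ≤ ρ p * ‖dφ p x‖ ^ 2 :=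
    fun p x => mul_nonneg (hρ p) (by positivity)
  set G : ℝ → ENNReal := fun x => ∑' p, ENNReal.ofReal (ρ p * ‖dφ p x‖ ^ 2) with hG
  have measG : Measurable G :=
    Measurable.ennreal_tsum fun p => ENNReal.measurable_ofReal.comp (meas_D p)
  -- integrability on subintervals
  have hI' : ∀ p, IntegrableOn (fun x => ‖dφ p x‖ ^ 2) (Ioc 0 1) := fun p =>
    (intervalIntegrable_iff_integrableOn_Ioc_of_le zero_le_one).mp (hI p)
  have hIsub : ∀ (p : ℕ) (a b : ℝ), 0 ≤ a → b ≤ 1 →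
      IntegrableOn (fun x => ‖dφ p x‖ ^ 2) (Ioc a b) := fun p a b ha hb =>
    (hI' p).mono_set (Ioc_subset_Ioc ha hb)
  have hgsub : ∀ (p : ℕ) (a b : ℝ), 0 ≤ a → b ≤ 1 → IntegrableOn (dφ p) (Ioc a b) := by
    intro p a b ha hb
    have hc : IntegrableOn (fun _ : ℝ => (1:ℝ)) (Ioc a b) :=
      (integrableOn_const_iff (C := (1:ℝ))).mpr (Or.inr (by rw [Real.volume_Ioc]; exact ENNReal.ofReal_lt_top))
    have hsum2 : IntegrableOn (fun x => 1 + ‖dφ p x‖ ^ 2) (Ioc a b) := hc.add (hIsub p a b ha hb)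
    refine Integrable.mono' hsum2
      ((meas_dφ p).aestronglyMeasurable.restrict) (ae_of_all _ fun x => ?_)
    show ‖dφ p x‖ ≤ 1 + ‖dφ p x‖ ^ 2
    nlinarith [norm_nonneg (dφ p x), sq_nonneg (‖dφ p x‖ - 1)]
  -- Tonelli on subintervals
  have tone : ∀ a b : ℝ, 0 ≤ a → b ≤ 1 →
      ∫⁻ x in Ioc a b, G x
        = ∑' p, ENNReal.ofReal (ρ p * ∫ x in Ioc a b, ‖dφ p x‖ ^ 2) := by
    intro a b ha hb
    have hswap : ∫⁻ x in Ioc a b, G x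
        = ∑' p, ∫⁻ x in Ioc a b, ENNReal.ofReal (ρ p * ‖dφ p x‖ ^ 2) :=
      lintegral_tsum (fun p => (ENNReal.measurable_ofReal.comp (meas_D p)).aemeasurable)
    rw [hswap]
    refine tsum_congr fun p => ?_
    have hint : IntegrableOn (fun x => ρ p * ‖dφ p x‖ ^ 2) (Ioc a b) :=
      (hIsub p a b ha hb).const_mul (ρ p)
    have e := ofReal_integral_eq_lintegral_ofReal hint (ae_of_all _ fun x => Dnn p x)
    rw [← e, integral_const_mul]
  have hRHS_nn : ∀ p, 0 ≤ ρ p * ∫ x in (0:ℝ)..1, ‖dφ p x‖ ^ 2 := fun p =>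
    mul_nonneg (hρ p) (intervalIntegral.integral_nonneg zero_le_one fun x _ => by positivity)
  have hIoc_eq : ∀ (p : ℕ) (a b : ℝ), a ≤ b →
      (∫ x in a..b, ‖dφ p x‖ ^ 2) = ∫ x in Ioc a b, ‖dφ p x‖ ^ 2 := fun p a b h =>
    intervalIntegral.integral_of_le h
  have hGtop : ∫⁻ x in Ioc (0:ℝ) 1, G x
      = ENNReal.ofReal (∑' p, ρ p * ∫ x in (0:ℝ)..1, ‖dφ p x‖ ^ 2) := by
    rw [tone 0 1 le_rfl le_rfl, ENNReal.ofReal_tsum_of_nonneg hRHS_nn hE]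
    exact tsum_congr fun p => by rw [hIoc_eq p 0 1 zero_le_one]
  have hGfin : ∫⁻ x in Ioc (0:ℝ) 1, G x ≠ ⊤ := by rw [hGtop]; exact ENNReal.ofReal_ne_top
  have tsum_nn : 0 ≤ ∑' p, ρ p * ∫ x in (0:ℝ)..1, ‖dφ p x‖ ^ 2 := tsum_nonneg hRHS_nn
  by_cases hsum : ∃ x ∈ Icc (0:ℝ) 1, Summable fun p => ρ p * ‖φ p x‖ ^ 2
  · obtain ⟨x₀, hx₀I, hx₀⟩ := hsum
    have normsq : ∀ (c : ℝ), 0 ≤ c → ∀ z : ℂ, ‖(Real.sqrt c : ℂ) * z‖ ^ 2 = c * ‖z‖ ^ 2 := by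
      intro c hc z
      rw [norm_mul, mul_pow, Complex.norm_real, Real.norm_eq_abs,
        abs_of_nonneg (Real.sqrt_nonneg c), Real.sq_sqrt hc]
    have sumdiff : ∀ a b : ℝ, 0 ≤ a → a ≤ b → b ≤ 1 →
        Summable (fun p => ρ p * ‖φ p b - φ p a‖ ^ 2) ∧
        ∑' p, ρ p * ‖φ p b - φ p a‖ ^ 2 ≤ (b - a) * (∫⁻ x in Ioc a b, G x).toReal := by
      intro a b ha hab hb
      have per : ∀ p, ρ p * ‖φ p b - φ p a‖ ^ 2
          ≤ (b - a) * (ρ p * ∫ x in Ioc a b, ‖dφ p x‖ ^ 2) := by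
        intro p
        have h := aux_ftc_cs hab (hφ p) (hgsub p a b ha hb) (hIsub p a b ha hb)
        calc ρ p * ‖φ p b - φ p a‖ ^ 2
            ≤ ρ p * ((b - a) * ∫ x in Ioc a b, ‖dφ p x‖ ^ 2) :=
              mul_le_mul_of_nonneg_left h (hρ p)
          _ = (b - a) * (ρ p * ∫ x in Ioc a b, ‖dφ p x‖ ^ 2) := by ring
      have hIabnn : ∀ p, 0 ≤ ρ p * ∫ x in Ioc a b, ‖dφ p x‖ ^ 2 := fun p =>
        mul_nonneg (hρ p) (setIntegral_nonneg measurableSet_Ioc fun x _ => by positivity)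
      have hsub2 : Summable (fun p => ρ p * ∫ x in Ioc a b, ‖dφ p x‖ ^ 2) := by
        refine Summable.of_nonneg_of_le hIabnn (fun p => ?_) hE
        rw [hIoc_eq p 0 1 zero_le_one]
        refine mul_le_mul_of_nonneg_left ?_ (hρ p)
        exact setIntegral_mono_set (hI' p) (ae_of_all _ fun x => by positivity)
          (HasSubset.Subset.eventuallyLE (Ioc_subset_Ioc ha hb))
      have hs2 : Summable (fun p => (b - a) * (ρ p * ∫ x in Ioc a b, ‖dφ p x‖ ^ 2)) :=
        hsub2.mul_left _
      have hsummable : Summable (fun p => ρ p * ‖φ p b - φ p a‖ ^ 2) :=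
        Summable.of_nonneg_of_le (fun p => mul_nonneg (hρ p) (by positivity)) per hs2
      refine ⟨hsummable, ?_⟩
      have h1 := hsummable.tsum_le_tsum per hs2
      rw [tsum_mul_left] at h1
      have h2 : ∫⁻ x in Ioc a b, G x
          = ENNReal.ofReal (∑' p, ρ p * ∫ x in Ioc a b, ‖dφ p x‖ ^ 2) := by
        rw [tone a b ha hb, ENNReal.ofReal_tsum_of_nonneg hIabnn hsub2]
      rw [h2, ENNReal.toReal_ofReal (tsum_nonneg hIabnn)]
      exact h1
    have sumAll : ∀ y ∈ Icc (0:ℝ) 1, Summable fun p => ρ p * ‖φ p y‖ ^ 2 := by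
      intro y hy
      have hdiff : Summable fun p => ρ p * ‖φ p y - φ p x₀‖ ^ 2 := by
        rcases le_total y x₀ with h | h
        · exact ((sumdiff y x₀ hy.1 h hx₀I.2).1).congr fun p => by rw [norm_sub_rev]
        · exact (sumdiff x₀ y hx₀I.1 h hy.2).1
      refine Summable.of_nonneg_of_le (fun p => mul_nonneg (hρ p) (by positivity))
        (fun p => ?_) ((hx₀.mul_left 2).add (hdiff.mul_left 2))
      have htri : ‖φ p y‖ ≤ ‖φ p x₀‖ + ‖φ p y - φ p x₀‖ := by
        calc ‖φ p y‖ = ‖φ p x₀ + (φ p y - φ p x₀)‖ := by ring_nf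
          _ ≤ ‖φ p x₀‖ + ‖φ p y - φ p x₀‖ := norm_add_le _ _
      have hsq : ‖φ p y‖ ^ 2 ≤ 2 * ‖φ p x₀‖ ^ 2 + 2 * ‖φ p y - φ p x₀‖ ^ 2 := by
        nlinarith [htri, norm_nonneg (φ p y), norm_nonneg (φ p x₀),
          norm_nonneg (φ p y - φ p x₀), sq_nonneg (‖φ p x₀‖ - ‖φ p y - φ p x₀‖)]
      calc ρ p * ‖φ p y‖ ^ 2
          ≤ ρ p * (2 * ‖φ p x₀‖ ^ 2 + 2 * ‖φ p y - φ p x₀‖ ^ 2) :=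
            mul_le_mul_of_nonneg_left hsq (hρ p)
        _ = 2 * (ρ p * ‖φ p x₀‖ ^ 2) + 2 * (ρ p * ‖φ p y - φ p x₀‖ ^ 2) := by ring
    set S : ℝ → ℝ := (Ioc (0:ℝ) 1).indicator (fun y => (G y).toReal) with hSdef
    have hSint : Integrable S := by
      rw [hSdef, integrable_indicator_iff measurableSet_Ioc]
      exact integrable_toReal_of_lintegral_ne_top (measG.aemeasurable.restrict) hGfin
    have intS : ∀ a b : ℝ, 0 ≤ a → a ≤ b → b ≤ 1 →
        ∫ y in Ioc a b, S y = (∫⁻ y in Ioc a b, G y).toReal := by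
      intro a b ha hab hb
      have hsub : Ioc a b ⊆ Ioc 0 1 := Ioc_subset_Ioc ha hb
      have hfin' : ∫⁻ y in Ioc a b, G y ≠ ⊤ :=
        ne_top_of_le_ne_top hGfin (lintegral_mono_set hsub)
      have h1 : EqOn S (fun y => (G y).toReal) (Ioc a b) := fun y hy => by
        rw [hSdef]; exact indicator_of_mem (hsub hy) _
      rw [setIntegral_congr_fun measurableSet_Ioc h1,
        integral_toReal (measG.aemeasurable.restrict)
          (ae_lt_top' (measG.aemeasurable.restrict) hfin')]
    have hLeb : ∀ᵐ x : ℝ, Tendsto (fun r => ⨍ y in closedBall x r, S y)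
        (𝓝[>] (0:ℝ)) (𝓝 (S x)) := by
      filter_upwards [IsUnifLocDoublingMeasure.ae_tendsto_average (μ := volume)
        hSint.locallyIntegrable 1] with x hx
      refine hx (fun _ => x) (fun r => r) tendsto_id ?_
      filter_upwards [self_mem_nhdsWithin] with r (hr : (0:ℝ) < r)
      exact mem_closedBall_self (by linarith)
    have pointwise : ∀ᵐ x : ℝ, x ∈ Ioo (0:ℝ) 1 → ds x ^ 2 ≤ S x := by
      filter_upwards [hLeb] with x hx hxI
      have hq : Tendsto
          (fun r => ((Real.sqrt (n (x + r)) - Real.sqrt (n (x - r))) / (2 * r)) ^ 2)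
          (𝓝[>] (0:ℝ)) (𝓝 (ds x ^ 2)) := (aux_symm_quot (hs x)).pow 2
      refine le_of_tendsto_of_tendsto hq hx ?_
      have hm : 0 < min x (1 - x) := lt_min hxI.1 (by linarith [hxI.2])
      filter_upwards [Ioo_mem_nhdsGT_of_mem ⟨le_rfl, hm⟩] with r hr
      obtain ⟨hr0, hrm⟩ := hr
      have hrx : r < x := lt_of_lt_of_le hrm (min_le_left _ _)
      have hrx1 : r < 1 - x := lt_of_lt_of_le hrm (min_le_right _ _)
      have ha : 0 ≤ x - r := by linarith
      have hab : x - r ≤ x + r := by linarith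
      have hb1 : x + r ≤ 1 := by linarith
      have hsb : Summable fun p => ρ p * ‖φ p (x + r)‖ ^ 2 :=
        sumAll (x + r) ⟨by linarith, hb1⟩
      have hsa : Summable fun p => ρ p * ‖φ p (x - r)‖ ^ 2 :=
        sumAll (x - r) ⟨ha, by linarith⟩
      obtain ⟨hsd, hbound⟩ := sumdiff (x - r) (x + r) ha hab hb1
      have tdnn : 0 ≤ ∑' p, ρ p * ‖φ p (x + r) - φ p (x - r)‖ ^ 2 :=
        tsum_nonneg fun p => mul_nonneg (hρ p) (by positivity)
      have tri : |Real.sqrt (n (x + r)) - Real.sqrt (n (x - r))|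
          ≤ Real.sqrt (∑' p, ρ p * ‖φ p (x + r) - φ p (x - r)‖ ^ 2) := by
        have eu : ∀ p, ρ p * ‖φ p (x + r)‖ ^ 2
            = ‖(Real.sqrt (ρ p) : ℂ) * φ p (x + r)‖ ^ 2 := fun p => (normsq _ (hρ p) _).symm
        have ev : ∀ p, ρ p * ‖φ p (x - r)‖ ^ 2
            = ‖(Real.sqrt (ρ p) : ℂ) * φ p (x - r)‖ ^ 2 := fun p => (normsq _ (hρ p) _).symm
        have ed : ∀ p, ρ p * ‖φ p (x + r) - φ p (x - r)‖ ^ 2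
            = ‖(Real.sqrt (ρ p) : ℂ) * φ p (x + r)
                - (Real.sqrt (ρ p) : ℂ) * φ p (x - r)‖ ^ 2 := fun p => by
          rw [← mul_sub]; exact (normsq _ (hρ p) _).symm
        rw [hn (x + r), hn (x - r), tsum_congr eu, tsum_congr ev, tsum_congr ed]
        exact aux_l2 (hsb.congr eu) (hsa.congr ev) (hsd.congr ed)
      have hd2 : (Real.sqrt (n (x + r)) - Real.sqrt (n (x - r))) ^ 2
          ≤ 2 * r * ∫ y in Ioc (x - r) (x + r), S y := by
        have h1 : (Real.sqrt (n (x + r)) - Real.sqrt (n (x - r))) ^ 2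
            ≤ ∑' p, ρ p * ‖φ p (x + r) - φ p (x - r)‖ ^ 2 := by
          rw [← sq_abs]
          refine (pow_le_pow_left₀ (abs_nonneg _) tri 2).trans ?_
          rw [Real.sq_sqrt tdnn]
        rw [intS (x - r) (x + r) ha hab hb1]
        have := h1.trans hbound
        rwa [show x + r - (x - r) = 2 * r by ring] at this
      have havg : ⨍ y in closedBall x r, S y
          = (2 * r)⁻¹ * ∫ y in Ioc (x - r) (x + r), S y := by
        rw [setAverage_eq, measureReal_def, Real.closedBall_eq_Icc, Real.volume_Icc,
          MeasureTheory.integral_Icc_eq_integral_Ioc,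
          show x + r - (x - r) = 2 * r by ring,
          ENNReal.toReal_ofReal (by linarith), smul_eq_mul]
      show ((Real.sqrt (n (x + r)) - Real.sqrt (n (x - r))) / (2 * r)) ^ 2
          ≤ ⨍ y in closedBall x r, S y
      rw [havg, div_pow, div_le_iff₀ (by positivity)]
      calc (Real.sqrt (n (x + r)) - Real.sqrt (n (x - r))) ^ 2
          ≤ 2 * r * ∫ y in Ioc (x - r) (x + r), S y := hd2
        _ = (2 * r)⁻¹ * (∫ y in Ioc (x - r) (x + r), S y) * (2 * r) ^ 2 := by
            field_simp
    have hds2 : IntegrableOn (fun x => ds x ^ 2) (Ioc 0 1) :=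
      (intervalIntegrable_iff_integrableOn_Ioc_of_le zero_le_one).mp hIs
    have hne1 : ∀ᵐ x : ℝ ∂volume, x ≠ 1 := by
      refine ae_iff.mpr ?_
      have : {x : ℝ | ¬x ≠ 1} = {1} := by ext x; simp
      rw [this, Real.volume_singleton]
    have main : ∫ x in Ioc (0:ℝ) 1, ds x ^ 2 ≤ ∫ x in Ioc (0:ℝ) 1, S x := by
      refine integral_mono_ae hds2 hSint.integrableOn ?_
      filter_upwards [ae_restrict_mem measurableSet_Ioc,
        hne1.filter_mono (ae_mono Measure.restrict_le_self),
        pointwise.filter_mono (ae_mono Measure.restrict_le_self)] with x hx hx1 hpt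
      exact hpt ⟨hx.1, lt_of_le_of_ne hx.2 hx1⟩
    have hfinal : ∫ x in Ioc (0:ℝ) 1, S x
        = ∑' p, ρ p * ∫ x in (0:ℝ)..1, ‖dφ p x‖ ^ 2 := by
      rw [intS 0 1 le_rfl zero_le_one le_rfl, hGtop, ENNReal.toReal_ofReal tsum_nn]
    rw [intervalIntegral.integral_of_le zero_le_one]
    have := main.trans_eq hfinal
    linarith
  · -- degenerate case: density identically zero on [0,1]
    push_neg at hsum
    have hn0 : ∀ x ∈ Icc (0:ℝ) 1, n x = 0 := fun x hx => by
      rw [hn x, tsum_eq_zero_of_not_summable (hsum x hx)]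
    have hds0 : ∀ x ∈ Ioo (0:ℝ) 1, ds x = 0 := by
      intro x hx
      have hev : (fun y => Real.sqrt (n y)) =ᶠ[𝓝 x] fun _ => (0:ℝ) := by
        filter_upwards [Ioo_mem_nhds hx.1 hx.2] with y hy
        rw [hn0 y (Ioo_subset_Icc_self hy), Real.sqrt_zero]
      have h0 : HasDerivAt (fun y => Real.sqrt (n y)) 0 x :=
        (hasDerivAt_const x (0:ℝ)).congr_of_eventuallyEq hev
      exact (hs x).unique h0
    have hzero : ∫ x in (0:ℝ)..1, ds x ^ 2 = 0 := by
      rw [intervalIntegral.integral_of_le zero_le_one]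
      have hne1 : ∀ᵐ x : ℝ ∂volume, x ≠ 1 := by
        refine ae_iff.mpr ?_
        have : {x : ℝ | ¬x ≠ 1} = {1} := by ext x; simp
        rw [this, Real.volume_singleton]
      have : ∀ᵐ x : ℝ ∂(volume.restrict (Ioc (0:ℝ) 1)), ds x ^ 2 = 0 := by
        filter_upwards [ae_restrict_mem measurableSet_Ioc,
          hne1.filter_mono (ae_mono Measure.restrict_le_self)] with x hx hx1
        have : x ∈ Ioo (0:ℝ) 1 := ⟨hx.1, lt_of_le_of_ne hx.2 hx1⟩
        rw [hds0 x this]; ring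
      rw [integral_congr_ae this, integral_zero]
    rw [hzero, mul_zero]
    positivity
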